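/- Let X_P : ℝ → ℂ be a regular curve, T(φ) = X_P'(φ)/|X_P'(φ)| its unit tangent, and suppose T'(φ) = i·h(φ)·T(φ) with real h(φ) ≠ 0. Fix real constants α, and let λ : ℝ → ℝ be differentiable with λ'(φ) = −|X_P'(φ)|. Define the family of lines through X_P(φ) + λ(φ)·T(φ) with direction i·exp(±iα)·T(φ). Then the envelope of this family is the curve X_F(φ) = X_P(φ) + λ(φ)·T(φ)·exp(±iα)·cos α. -/

import Mathlib

noncomputable def ext (A B : ℂ) : ℂ :=
  Complex.I / 2 * (A * (starRingEnd ℂ) B - (starRingEnd ℂ) A * B)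

set_option maxRecDepth 8000 in
set_option maxHeartbeats 2000000 in
theorem flank_curve_envelope
    (X_P T : ℝ → ℂ) (h lam : ℝ → ℝ) (α ε : ℝ)
    (hε : ε = 1 ∨ ε = -1)
    (hreg : ∀ t, deriv X_P t ≠ 0)
    (hT : ∀ t, T t = deriv X_P t / (‖deriv X_P t‖ : ℂ))
    (hT' : ∀ t, HasDerivAt T (Complex.I * (h t : ℂ) * T t) t)
    (hh : ∀ t, h t ≠ 0)
    (hlam : ∀ t, HasDerivAt lam (-(‖deriv X_P t‖)) t)
    (A B : ℝ → ℂ)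
    (hA : ∀ t, A t = X_P t + (lam t : ℂ) * T t +
      Complex.I * Complex.exp ((ε : ℂ) * α * Complex.I) * T t)
    (hB : ∀ t, B t = X_P t + (lam t : ℂ) * T t)
    (φ : ℝ) :
    ∀ X : ℂ,
      (ext (A φ - B φ) X = ext (A φ) (B φ) ∧
       ext (deriv (fun t => A t - B t) φ) X = deriv (fun t => ext (A t) (B t)) φ) ↔
      X = X_P φ + (lam φ : ℂ) * T φ * Complex.exp ((ε : ℂ) * α * Complex.I) *
            (Real.cos α : ℂ) := by
  have hAfun : A = fun t => X_P t + (lam t : ℂ) * T t +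
      Complex.I * Complex.exp ((ε : ℂ) * α * Complex.I) * T t := funext hA
  have hBfun : B = fun t => X_P t + (lam t : ℂ) * T t := funext hB
  subst hAfun hBfun
  set E : ℂ := Complex.exp ((ε : ℂ) * α * Complex.I) with hE
  -- basic facts
  have hXdiff : ∀ t, DifferentiableAt ℝ X_P t := by
    intro t
    by_contra hc
    exact hreg t (deriv_zero_of_not_differentiableAt hc)
  have hXP' : HasDerivAt X_P (deriv X_P φ) φ := (hXdiff φ).hasDerivAt
  have hr : (‖deriv X_P φ‖ : ℂ) ≠ 0 := by
    simpa using hreg φ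
  have hXd : deriv X_P φ = (‖deriv X_P φ‖ : ℂ) * T φ := by
    rw [hT φ]; field_simp
  have hXdc : (starRingEnd ℂ) (deriv X_P φ)
      = (‖deriv X_P φ‖ : ℂ) * (starRingEnd ℂ) (T φ) := by
    have := congrArg (starRingEnd ℂ) hXd
    rwa [map_mul, Complex.conj_ofReal] at this
  have hTT : T φ * (starRingEnd ℂ) (T φ) = 1 := by
    rw [hT φ]
    rw [map_div₀, Complex.conj_ofReal, div_mul_div_comm, Complex.mul_conj]
    rw [← Complex.ofReal_mul, ← Complex.sq_norm, sq]
    field_simp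
  have hE1 : E * (starRingEnd ℂ) E = 1 := by
    rw [hE, ← Complex.exp_conj]
    rw [← Complex.exp_add]
    simp [Complex.ext_iff]
  have hcos : (Real.cos α : ℂ) * 2 = E + (starRingEnd ℂ) E := by
    rcases hε with rfl | rfl
    · have e1 : ((1 : ℝ) : ℂ) * α * Complex.I = (α : ℂ) * Complex.I := by
        push_cast; ring
      have e2 : (starRingEnd ℂ) (((1 : ℝ) : ℂ) * α * Complex.I)
          = -(α : ℂ) * Complex.I := by
        rw [map_mul, map_mul, Complex.conj_I, Complex.conj_ofReal, Complex.conj_ofReal]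
        push_cast; ring
      rw [hE, ← Complex.exp_conj, Complex.ofReal_cos, mul_comm, e2, e1]
      exact Complex.two_cos _
    · have e1 : ((-1 : ℝ) : ℂ) * α * Complex.I = -(α : ℂ) * Complex.I := by
        push_cast; ring
      have e2 : (starRingEnd ℂ) (((-1 : ℝ) : ℂ) * α * Complex.I)
          = (α : ℂ) * Complex.I := by
        rw [map_mul, map_mul, Complex.conj_I, Complex.conj_ofReal, Complex.conj_ofReal]
        push_cast; ring
      rw [hE, ← Complex.exp_conj, Complex.ofReal_cos, mul_comm, e2, e1]
      rw [Complex.two_cos]; ring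
  -- derivatives
  have hlamC : HasDerivAt (fun t => ((lam t : ℝ) : ℂ))
      ((-(‖deriv X_P φ‖) : ℝ) : ℂ) φ := (hlam φ).ofReal_comp
  have hBd : HasDerivAt (fun t => X_P t + (lam t : ℂ) * T t)
      (deriv X_P φ + (((-(‖deriv X_P φ‖) : ℝ) : ℂ) * T φ +
        (lam φ : ℂ) * (Complex.I * (h φ : ℂ) * T φ))) φ :=
    hXP'.add (hlamC.mul (hT' φ))
  have hDd : HasDerivAt (fun t => Complex.I * E * T t)
      (Complex.I * E * (Complex.I * (h φ : ℂ) * T φ)) φ := (hT' φ).const_mul _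
  have hAd : HasDerivAt (fun t => X_P t + (lam t : ℂ) * T t + Complex.I * E * T t)
      ((deriv X_P φ + (((-(‖deriv X_P φ‖) : ℝ) : ℂ) * T φ +
        (lam φ : ℂ) * (Complex.I * (h φ : ℂ) * T φ))) +
        Complex.I * E * (Complex.I * (h φ : ℂ) * T φ)) φ := hBd.add hDd
  have hdiff_eq : (fun t => (X_P t + (lam t : ℂ) * T t + Complex.I * E * T t) -
      (X_P t + (lam t : ℂ) * T t)) = fun t => Complex.I * E * T t := by
    funext t; ring
  have hderiv1 : deriv (fun t =>
      (X_P t + (lam t : ℂ) * T t + Complex.I * E * T t) -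
      (X_P t + (lam t : ℂ) * T t)) φ
      = Complex.I * E * (Complex.I * (h φ : ℂ) * T φ) := by
    rw [hdiff_eq]; exact hDd.deriv
  set Av := (deriv X_P φ + (((-(‖deriv X_P φ‖) : ℝ) : ℂ) * T φ +
        (lam φ : ℂ) * (Complex.I * (h φ : ℂ) * T φ))) +
        Complex.I * E * (Complex.I * (h φ : ℂ) * T φ) with hAv
  set Bv := deriv X_P φ + (((-(‖deriv X_P φ‖) : ℝ) : ℂ) * T φ +
        (lam φ : ℂ) * (Complex.I * (h φ : ℂ) * T φ)) with hBv
  have hcAd : HasDerivAt (fun t => (starRingEnd ℂ)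
      (X_P t + (lam t : ℂ) * T t + Complex.I * E * T t)) ((starRingEnd ℂ) Av) φ := by
    simp only [starRingEnd_apply]
    exact hAd.star
  have hcBd : HasDerivAt (fun t => (starRingEnd ℂ)
      (X_P t + (lam t : ℂ) * T t)) ((starRingEnd ℂ) Bv) φ := by
    simp only [starRingEnd_apply]
    exact hBd.star
  have hFd : HasDerivAt (fun t => ext (X_P t + (lam t : ℂ) * T t + Complex.I * E * T t)
      (X_P t + (lam t : ℂ) * T t))
      (Complex.I / 2 * ((Av * (starRingEnd ℂ) (X_P φ + (lam φ : ℂ) * T φ) +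
        (X_P φ + (lam φ : ℂ) * T φ + Complex.I * E * T φ) * (starRingEnd ℂ) Bv) -
        ((starRingEnd ℂ) Av * (X_P φ + (lam φ : ℂ) * T φ) +
        (starRingEnd ℂ) (X_P φ + (lam φ : ℂ) * T φ + Complex.I * E * T φ) * Bv))) φ := by
    simp only [ext]
    exact ((hAd.mul hcBd).sub (hcAd.mul hBd)).const_mul _
  have hderiv2 := hFd.deriv
  intro X
  rw [hderiv1, hderiv2]
  simp only [ext, hAv, hBv, map_add, map_sub, map_mul, Complex.conj_ofReal,
    Complex.conj_I, Complex.conj_conj, Complex.ofReal_neg, map_neg]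
  set dX := deriv X_P φ with hdX
  set cdX := (starRingEnd ℂ) dX with hcdX
  set r : ℂ := ((‖dX‖ : ℝ) : ℂ) with hrr
  set P := X_P φ with hP
  set cP := (starRingEnd ℂ) (X_P φ) with hcP
  set t := T φ with ht
  set ct := (starRingEnd ℂ) (T φ) with hct
  set cE := (starRingEnd ℂ) E with hcE
  set L : ℂ := (lam φ : ℂ) with hL
  set H : ℂ := (h φ : ℂ) with hH
  have hI : Complex.I ^ 2 = -1 := Complex.I_sq
  have hcL : (starRingEnd ℂ) L = L := by rw [hL]; exact Complex.conj_ofReal _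
  constructor
  · rintro ⟨h1, h2⟩
    have key1 : E * t * (starRingEnd ℂ) X + cE * ct * X
        = E * t * (cP + L * ct) + cE * ct * (P + L * t) := by
      linear_combination (-2 : ℂ) * h1 + (E * t * (starRingEnd ℂ) X + cE * ct * X
        - E * t * ct * L - E * t * cP - t * cE * ct * L - cE * ct * P) * hI
    have hkey : H * ((cE * ct * (X - (P + L * t))) * 2 - L * (E - cE)) = 0 := by
      linear_combination (-2 * Complex.I) * h2 + H * key1 + (L * H * (E - cE)) * hTT
        + (Complex.I * cE * ct) * hXd + (Complex.I * E * t) * hXdc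
        + (H * cE * ct * (X - P) * (1 - Complex.I ^ 2)
          + H * t * E * (cP - (starRingEnd ℂ) X) * (1 - Complex.I ^ 2)
          + Complex.I * (cE * ct * (r * t - dX) + t * E * (ct * r - cdX))) * hI
    have hH0 : H ≠ 0 := by
      rw [hH]
      exact_mod_cast Complex.ofReal_ne_zero.mpr (hh φ)
    have c1 : (cE * ct * (X - (P + L * t))) * 2 - L * (E - cE) = 0 :=
      (mul_eq_zero.mp hkey).resolve_left hH0
    linear_combination (E * t / 2) * c1 + (-(X - (P + L * t)) - L * t) * hE1
      + (-(E * cE * (X - (P + L * t)))) * hTT + (-(L * t * E / 2)) * hcos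
  · rintro rfl
    simp only [map_add, map_mul, map_neg, Complex.conj_ofReal, Complex.conj_I,
      Complex.conj_conj, ← hcP, ← hct, ← hcE]
    refine ⟨?_, ?_⟩
    · linear_combination (-(1 : ℂ) / 2) * (L * t * ct) * hcos
        + (-(L * t * ct * (Real.cos α : ℂ))) * hE1
        + ((L * t * ct / 2) * (2 * E * cE * (Real.cos α : ℂ) - E - cE)) * hI
        + (Complex.I ^ 2 * t * E * ct * cE * (Real.cos α : ℂ) / 2) * hcL
    · linear_combination (cE * ct / 2) * hXd + (E * t / 2) * hXdc
        + ((E * t * ct * r - E * t * cdX + t * ct * cE * r - ct * cE * dX) / 2) * hI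
        + (Complex.I ^ 3 * E * H * t * ct * cE * (Real.cos α : ℂ) / 2) * hcL
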